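/- Let A be a real symmetric positive semidefinite n×n matrix and let x ∈ ℝⁿ lie in the range (column space) of A. Then x·xᵀ ⪯ (xᵀ A⁺ x) · A, where A⁺ is the Moore–Penrose pseudoinverse of A. -/

import Mathlib

open Matrix

/-- The four Penrose conditions characterizing the Moore–Penrose pseudoinverse `P` of a real
matrix `A`. -/
def IsMoorePenrose {ι : Type*} [Fintype ι] (A P : Matrix ι ι ℝ) : Prop :=
  A * P * A = A ∧ P * A * P = P ∧ (A * P)ᵀ = A * P ∧ (P * A)ᵀ = P * A

/-- Elementary Cauchy–Schwarz from nonnegativity of a quadratic. -/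
lemma cs_aux (a b d : ℝ) (h : ∀ t : ℝ, 0 ≤ a + 2 * t * b + t ^ 2 * d) :
    b ^ 2 ≤ a * d := by
  have ha : 0 ≤ a := by have := h 0; linarith
  have hd0 : 0 ≤ d := by
    by_contra hd
    push_neg at hd
    set t := Real.sqrt ((a + 1) / (-d)) with ht
    have hdne : d ≠ 0 := ne_of_lt hd
    have ht2 : t ^ 2 = (a + 1) / (-d) :=
      Real.sq_sqrt (div_nonneg (by linarith) (by linarith))
    have htd : t ^ 2 * d = -(a + 1) := by
      rw [ht2, div_mul_eq_mul_div, div_neg, mul_div_assoc, div_self hdne, mul_one]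
    have h1 := h t
    have h2 := h (-t)
    nlinarith
  rcases eq_or_lt_of_le hd0 with hd | hd
  · have hb : b = 0 := by
      by_contra hb
      have h1 := h (-(a + 1) / (2 * b))
      have hkey : 2 * (-(a + 1) / (2 * b)) * b = -(a + 1) := by field_simp
      rw [← hd] at h1
      nlinarith
    nlinarith
  · have h1 := h (-b / d)
    have hd' : d ≠ 0 := ne_of_gt hd
    have hkey : a + 2 * (-b / d) * b + (-b / d) ^ 2 * d = a - b ^ 2 / d := by
      field_simp; ring
    have h2 : b ^ 2 / d ≤ a := by linarith [hkey ▸ h1]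
    calc b ^ 2 = b ^ 2 / d * d := by field_simp
      _ ≤ a * d := by nlinarith

/-- for a positive semidefinite `A` and `x` in the range of `A`,
`x xᵀ ⪯ (xᵀ A⁺ x) A`. -/
theorem rank_one_pseudo_inverse_inequality
    {n : ℕ} (A P : Matrix (Fin n) (Fin n) ℝ) (hA : A.PosSemidef)
    (hP : IsMoorePenrose A P)
    (x : Fin n → ℝ) (hx : ∃ y : Fin n → ℝ, x = A.mulVec y) :
    ((x ⬝ᵥ P.mulVec x) • A - Matrix.vecMulVec x x).PosSemidef := by
  obtain ⟨y, rfl⟩ := hx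
  set x := A.mulVec y with hxdef
  have hAt : Aᵀ = A := by
    have := hA.1
    ext i j
    have h := congrFun (congrFun this i) j
    simpa using h
  have hs : ∀ i j, A j i = A i j := fun i j => by
    conv_lhs => rw [← hAt]
    exact Matrix.transpose_apply A j i
  have hsym : ∀ u v : Fin n → ℝ, u ⬝ᵥ A.mulVec v = v ⬝ᵥ A.mulVec u := by
    intro u v
    rw [Matrix.dotProduct_mulVec, ← Matrix.mulVec_transpose, hAt, dotProduct_comm]
  have hc : x ⬝ᵥ P.mulVec x = y ⬝ᵥ A.mulVec y := by
    have hfix : A.mulVec (P.mulVec x) = x := by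
      rw [hxdef, Matrix.mulVec_mulVec, Matrix.mulVec_mulVec, hP.1]
    calc x ⬝ᵥ P.mulVec x = P.mulVec x ⬝ᵥ x := dotProduct_comm _ _
      _ = P.mulVec x ⬝ᵥ A.mulVec y := by rw [hxdef]
      _ = y ⬝ᵥ A.mulVec (P.mulVec x) := by rw [← hsym y (P.mulVec x), dotProduct_comm]
      _ = y ⬝ᵥ A.mulVec y := by rw [hfix, hxdef]
  refine posSemidef_iff_dotProduct_mulVec.mpr ⟨?_, ?_⟩
  · show _ = _
    ext i j
    simp only [Matrix.conjTranspose_apply, Matrix.sub_apply, Matrix.smul_apply,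
      Matrix.vecMulVec_apply, smul_eq_mul, star_trivial]
    rw [hs i j]; ring
  · intro z
    have hstar : star z = z := by ext i; simp
    have hrank : (Matrix.vecMulVec x x).mulVec z = (x ⬝ᵥ z) • x := by
      ext j
      simp [Matrix.mulVec, Matrix.vecMulVec_apply, dotProduct, Finset.mul_sum, mul_comm,
        mul_assoc, mul_left_comm]
    have hb : x ⬝ᵥ z = y ⬝ᵥ A.mulVec z := by
      rw [hxdef, dotProduct_comm, hsym z y]
    have hq : ∀ t : ℝ, 0 ≤ y ⬝ᵥ A.mulVec y + 2 * t * (y ⬝ᵥ A.mulVec z) +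
        t ^ 2 * (z ⬝ᵥ A.mulVec z) := by
      intro t
      have h0 := hA.dotProduct_mulVec_nonneg (y + t • z)
      simp only [star_add, star_smul, star_trivial, Matrix.mulVec_add, Matrix.mulVec_smul,
        dotProduct_add, add_dotProduct, dotProduct_smul, smul_dotProduct, smul_eq_mul,
        RCLike.re_to_real] at h0
      rw [hsym z y] at h0
      ring_nf at h0 ⊢
      linarith
    have key := cs_aux (y ⬝ᵥ A.mulVec y) (y ⬝ᵥ A.mulVec z) (z ⬝ᵥ A.mulVec z) hq
    have expand : z ⬝ᵥ (((x ⬝ᵥ P.mulVec x) • A - Matrix.vecMulVec x x).mulVec z)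
        = (x ⬝ᵥ P.mulVec x) * (z ⬝ᵥ A.mulVec z) - (x ⬝ᵥ z) * (x ⬝ᵥ z) := by
      rw [Matrix.sub_mulVec, dotProduct_sub, hrank, Matrix.smul_mulVec,
        dotProduct_smul, dotProduct_smul, smul_eq_mul, smul_eq_mul, dotProduct_comm z x]
    rw [hstar, expand, hc, hb]
    nlinarith [key]
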